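/- Let g be a Lie algebra with two gradings Γ_1, Γ_2 (by ad-semisimple elements), each giving rise to a Kazhdan filtration F^{Γ}_Δ U(g) = ∑_{s − j_1 − ⋯ − j_s ≤ Δ} g^{Γ}[j_1]⋯g^{Γ}[j_s] of U(g), and let G = Γ_1 − Γ_2 be the grading of U(g) by the difference of the two gradings. Then for all k, Δ one has F^{Γ_1}_Δ U(g)^G[k] = F^{Γ_2}_{Δ+k} U(g)^G[k], where U(g)^G[k] is the degree-k component of U(g) with respect to G. -/

import Mathlib

attribute [local instance 100] LieRing.ofAssociativeRing

/-- The Kazhdan filtration of `U(g)` attached to a grading `g = ⊕_j g[j]`: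
`F_Δ U(g) = ∑_{s - j₁ - ⋯ - j_s ≤ Δ} g[j₁] ⋯ g[j_s]`. -/
noncomputable def kazhdanFil {K : Type*} [Field K] {L : Type*} [LieRing L] [LieAlgebra K L]
    (g : ℚ → Submodule K L) (Δ : ℚ) :
    Submodule K (UniversalEnvelopingAlgebra K L) :=
  ⨆ (s : ℕ), ⨆ (j : Fin s → ℚ), ⨆ (_ : (s : ℚ) - ∑ t, j t ≤ Δ),
    (List.ofFn (fun t =>
      Submodule.map (UniversalEnvelopingAlgebra.ι K).toLinearMap (g (j t)))).prod

/-- The degree-`k` piece of the difference grading `G = Γ₁ - Γ₂` of `g`: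
`g^G[k] = ⊕_{k₁ - k₂ = k} (g^{Γ₁}[k₁] ∩ g^{Γ₂}[k₂])`. -/
noncomputable def diffGrading {K : Type*} [Field K] {L : Type*} [LieRing L] [LieAlgebra K L]
    (g₁ g₂ : ℚ → Submodule K L) (k : ℚ) : Submodule K L :=
  ⨆ (q : ℚ × ℚ), ⨆ (_ : q.1 - q.2 = k), (g₁ q.1 ⊓ g₂ q.2)

/-- The degree-`k` piece `U(g)^G[k]` of the multiplicative extension to `U(g)` of the
difference grading `G = Γ₁ - Γ₂`. -/
noncomputable def envDiffGraded {K : Type*} [Field K] {L : Type*} [LieRing L] [LieAlgebra K L]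
    (g₁ g₂ : ℚ → Submodule K L) (k : ℚ) :
    Submodule K (UniversalEnvelopingAlgebra K L) :=
  ⨆ (s : ℕ), ⨆ (j : Fin s → ℚ), ⨆ (_ : ∑ t, j t = k),
    (List.ofFn (fun t =>
      Submodule.map (UniversalEnvelopingAlgebra.ι K).toLinearMap
        (diffGrading g₁ g₂ (j t)))).prod

/-! ### Auxiliary lemmas -/

open UniversalEnvelopingAlgebra TrivSqZeroExt

section ProdLemmas
variable {K A : Type*} [CommSemiring K] [Semiring A] [Algebra K A]

theorem myOfFn_prod_mono : ∀ {s : ℕ} {P Q : Fin s → Submodule K A}, (∀ t, P t ≤ Q t) →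
    (List.ofFn P).prod ≤ (List.ofFn Q).prod
  | 0, _, _, _ => by simp
  | s+1, P, Q, h => by
    rw [List.ofFn_succ, List.ofFn_succ, List.prod_cons, List.prod_cons]
    exact mul_le_mul' (h 0) (myOfFn_prod_mono fun t => h t.succ)

theorem myOfFn_prod_iSup : ∀ {s : ℕ} (Q : Fin s → ℚ → Submodule K A),
    (List.ofFn fun t => ⨆ b, Q t b).prod ≤ ⨆ b : Fin s → ℚ, (List.ofFn fun t => Q t (b t)).prod
  | 0, Q => by
    simpa using le_iSup (fun b : Fin 0 → ℚ => (List.ofFn fun t => Q t (b t)).prod) (fun _ => 0)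
  | s+1, Q => by
    rw [List.ofFn_succ, List.prod_cons]
    refine le_trans (mul_le_mul' le_rfl (myOfFn_prod_iSup fun t => Q t.succ)) ?_
    rw [Submodule.mul_iSup]
    refine iSup_le fun c => ?_
    rw [Submodule.iSup_mul]
    refine iSup_le fun b => ?_
    refine le_trans ?_ (le_iSup _ (Fin.cons b c))
    rw [List.ofFn_succ, List.prod_cons]
    simp

end ProdLemmas

section EigenLemmas
variable {K A : Type*} [Field K] [Ring A] [Algebra K A]

theorem myDeriv_one (f : Module.End K A) (hf : ∀ u v, f (u * v) = f u * v + u * f v) :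
    f 1 = 0 := by
  have h := hf 1 1
  simp only [mul_one, one_mul] at h
  exact (add_eq_left (a := f 1) (b := f 1)).mp h.symm

theorem myEigen_mul (f : Module.End K A) (hf : ∀ u v, f (u * v) = f u * v + u * f v) (μ ν : K) :
    (f.eigenspace μ) * (f.eigenspace ν) ≤ f.eigenspace (μ + ν) := by
  rw [Submodule.mul_le]
  intro u hu v hv
  rw [Module.End.mem_eigenspace_iff] at *
  rw [hf, hu, hv, smul_mul_assoc, mul_smul_comm, add_smul]

theorem myOfFn_prod_eigen (f : Module.End K A) (hf : ∀ u v, f (u * v) = f u * v + u * f v) :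
    ∀ {s : ℕ} (μ : Fin s → K) (P : Fin s → Submodule K A),
      (∀ t, P t ≤ f.eigenspace (μ t)) → (List.ofFn P).prod ≤ f.eigenspace (∑ t, μ t)
  | 0, μ, P, _ => by
    simp only [List.ofFn_zero, List.prod_nil, Finset.univ_eq_empty, Finset.sum_empty]
    rw [Submodule.one_le, Module.End.mem_eigenspace_iff, myDeriv_one f hf, zero_smul]
  | s+1, μ, P, h => by
    rw [List.ofFn_succ, List.prod_cons, Fin.sum_univ_succ]
    exact le_trans
      (mul_le_mul' (h 0) (myOfFn_prod_eigen f hf _ _ fun t => h t.succ))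
      (myEigen_mul f hf _ _)

theorem myPick (f : Module.End K A) (S : ℚ → Submodule K A)
    (hS : ∀ k' : ℚ, S k' ≤ f.eigenspace ((k' : ℚ) : K)) {x : A} {k : ℚ} [CharZero K]
    (hx : x ∈ ⨆ k', S k') (hxk : x ∈ f.eigenspace ((k : ℚ) : K)) : x ∈ S k := by
  classical
  rw [Submodule.mem_iSup_iff_exists_finsupp] at hx
  obtain ⟨c, hc, hsum⟩ := hx
  have hy : x - c k ∈ f.eigenspace ((k : ℚ) : K) := sub_mem hxk (hS k (hc k))
  have hy2 : x - c k ∈ ⨆ (μ : K) (_ : μ ≠ ((k : ℚ) : K)), f.eigenspace μ := by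
    have hrepr : x - c k = ∑ k' ∈ c.support.erase k, c k' := by
      rw [← hsum, Finsupp.sum]
      by_cases hk : k ∈ c.support
      · rw [← Finset.add_sum_erase _ _ hk]; abel
      · rw [Finset.erase_eq_of_notMem hk, Finsupp.notMem_support_iff.mp hk, sub_zero]
    rw [hrepr]
    refine Submodule.sum_mem _ fun k' hk' => ?_
    have hne : ((k' : ℚ) : K) ≠ ((k : ℚ) : K) := by
      have h' := Finset.ne_of_mem_erase hk'
      exact fun hh => h' (by exact_mod_cast hh)
    exact Submodule.mem_iSup_of_mem ((k' : ℚ) : K)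
      (Submodule.mem_iSup_of_mem hne (hS k' (hc k')))
  have hdisj := Module.End.eigenspaces_iSupIndep f (i := ((k : ℚ) : K))
  have hz : x - c k = 0 := Submodule.disjoint_def.mp hdisj _ hy hy2
  have hxe : x = c k := by rwa [sub_eq_zero] at hz
  rw [hxe]; exact hc k

end EigenLemmas

section Diag
variable {K : Type*} [Field K] [CharZero K] {L : Type*} [LieRing L] [LieAlgebra K L]

noncomputable def myDiag (g : ℚ → Submodule K L) (h : DirectSum.IsInternal g) : L →ₗ[K] L :=
  (DirectSum.toModule K ℚ L fun j => (j : K) • (g j).subtype) ∘ₗ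
    (LinearEquiv.ofBijective (DirectSum.coeLinearMap g) h).symm.toLinearMap

theorem myDiag_apply (g : ℚ → Submodule K L) (h : DirectSum.IsInternal g) {j : ℚ} {x : L}
    (hx : x ∈ g j) : myDiag g h x = (j : K) • x := by
  have he : (LinearEquiv.ofBijective (DirectSum.coeLinearMap g) h).symm x
      = DirectSum.lof K ℚ (fun i => g i) j ⟨x, hx⟩ := by
    rw [LinearEquiv.symm_apply_eq]
    show x = DirectSum.coeLinearMap g (DirectSum.lof K ℚ (fun i => g i) j ⟨x, hx⟩)
    rw [DirectSum.lof_eq_of, DirectSum.coeLinearMap_of]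
  rw [myDiag, LinearMap.comp_apply, LinearEquiv.coe_toLinearMap, he, DirectSum.toModule_lof]
  rfl

theorem myDiag_deriv (g : ℚ → Submodule K L) (h : DirectSum.IsInternal g)
    (hbr : ∀ i j, ∀ x ∈ g i, ∀ y ∈ g j, ⁅x, y⁆ ∈ g (i + j)) (x y : L) :
    myDiag g h ⁅x, y⁆ = ⁅myDiag g h x, y⁆ + ⁅x, myDiag g h y⁆ := by
  have hx : x ∈ ⨆ j, g j := by rw [h.submodule_iSup_eq_top]; trivial
  refine Submodule.iSup_induction (motive := fun x => ∀ y : L,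
      myDiag g h ⁅x, y⁆ = ⁅myDiag g h x, y⁆ + ⁅x, myDiag g h y⁆) g hx ?_ ?_ ?_ y
  · intro i x hxi y
    have hy : y ∈ ⨆ j, g j := by rw [h.submodule_iSup_eq_top]; trivial
    refine Submodule.iSup_induction (motive := fun y =>
        myDiag g h ⁅x, y⁆ = ⁅myDiag g h x, y⁆ + ⁅x, myDiag g h y⁆) g hy ?_ ?_ ?_
    · intro j y hyj
      rw [myDiag_apply g h hxi, myDiag_apply g h hyj, myDiag_apply g h (hbr i j x hxi y hyj)]
      rw [smul_lie, lie_smul, Rat.cast_add, add_smul]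
    · simp
    · intro y z hy hz
      simp only [lie_add, map_add, hy, hz]; abel
  · intro y; simp
  · intro x z hx hz y
    simp only [add_lie, map_add, hx y, hz y]; abel

theorem myDiff_eigen (g₁ g₂ : ℚ → Submodule K L) (h₁ : DirectSum.IsInternal g₁)
    (h₂ : DirectSum.IsInternal g₂) (j : ℚ) :
    diffGrading g₁ g₂ j ≤
      LinearMap.ker ((myDiag g₁ h₁ - myDiag g₂ h₂) - (j : K) • LinearMap.id) := by
  refine iSup_le fun q => iSup_le fun hq => ?_
  rintro x ⟨hx1, hx2⟩
  rw [LinearMap.mem_ker, LinearMap.sub_apply, LinearMap.sub_apply, LinearMap.smul_apply,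
    LinearMap.id_apply, myDiag_apply g₁ h₁ hx1, myDiag_apply g₂ h₂ hx2, ← hq,
    Rat.cast_sub, sub_smul]
  abel

end Diag

section Ext
variable {K : Type*} [Field K] [CharZero K] {L : Type*} [LieRing L] [LieAlgebra K L]

local notation "𝒰" => UniversalEnvelopingAlgebra K L

noncomputable def myLieHom (D : L →ₗ[K] L)
    (hD : ∀ x y, D ⁅x, y⁆ = ⁅D x, y⁆ + ⁅x, D y⁆) :
    L →ₗ⁅K⁆ DualNumber 𝒰 where
  toFun x := (ι K x, ι K (D x))
  map_add' x y := by ext <;> simp <;> rfl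
  map_smul' c x := by ext <;> simp <;> rfl
  map_lie' {x y} := by
    have hlie : ∀ a b : DualNumber 𝒰, ⁅a, b⁆ = a * b - b * a := fun a b => rfl
    set a : DualNumber 𝒰 := (ι K x, ι K (D x)) with ha
    set b : DualNumber 𝒰 := (ι K y, ι K (D y)) with hb
    ext
    · show (ι K ⁅x,y⁆ : 𝒰) = _
      rw [hlie, TrivSqZeroExt.fst_sub, TrivSqZeroExt.fst_mul]
      show _ = (ι K x : 𝒰) * ι K y - (ι K y : 𝒰) * ι K x
      rw [← Ring.lie_def, LieHom.map_lie]
    · show (ι K (D ⁅x,y⁆) : 𝒰) = _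
      rw [hlie, TrivSqZeroExt.snd_sub, TrivSqZeroExt.snd_mul, TrivSqZeroExt.snd_mul]
      show _ = ((ι K x : 𝒰) • (ι K (D y) : 𝒰) + MulOpposite.op ((ι K y : 𝒰)) • (ι K (D x)))
        - ((ι K y : 𝒰) • (ι K (D x) : 𝒰) + MulOpposite.op ((ι K x : 𝒰)) • (ι K (D y)))
      rw [hD, map_add, LieHom.map_lie, LieHom.map_lie, Ring.lie_def, Ring.lie_def]
      simp only [smul_eq_mul, op_smul_eq_mul]
      abel

noncomputable def myExtD (D : L →ₗ[K] L)
    (hD : ∀ x y, D ⁅x, y⁆ = ⁅D x, y⁆ + ⁅x, D y⁆) : Module.End K 𝒰 where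
  toFun u := ((UniversalEnvelopingAlgebra.lift K (myLieHom D hD)) u).snd
  map_add' u v := by simp
  map_smul' c u := by simp

theorem myExtD_ι (D : L →ₗ[K] L) (hD : ∀ x y, D ⁅x, y⁆ = ⁅D x, y⁆ + ⁅x, D y⁆) (x : L) :
    myExtD D hD (ι K x) = ι K (D x) := by
  show ((UniversalEnvelopingAlgebra.lift K (myLieHom D hD)) (ι K x)).snd = _
  rw [UniversalEnvelopingAlgebra.lift_ι_apply]
  rfl

theorem myExtD_fst (D : L →ₗ[K] L) (hD : ∀ x y, D ⁅x, y⁆ = ⁅D x, y⁆ + ⁅x, D y⁆) (u : 𝒰) :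
    ((UniversalEnvelopingAlgebra.lift K (myLieHom D hD)) u).fst = u := by
  have h : (TrivSqZeroExt.fstHom K 𝒰 𝒰).comp (UniversalEnvelopingAlgebra.lift K (myLieHom D hD))
      = AlgHom.id K 𝒰 := by
    apply UniversalEnvelopingAlgebra.hom_ext
    ext x
    show ((UniversalEnvelopingAlgebra.lift K (myLieHom D hD)) (ι K x)).fst = ι K x
    rw [UniversalEnvelopingAlgebra.lift_ι_apply]
    rfl
  exact congrArg (fun f => (f : 𝒰 →ₐ[K] 𝒰) u) h

theorem myExtD_mul (D : L →ₗ[K] L) (hD : ∀ x y, D ⁅x, y⁆ = ⁅D x, y⁆ + ⁅x, D y⁆) (u v : 𝒰) :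
    myExtD D hD (u * v) = myExtD D hD u * v + u * myExtD D hD v := by
  show ((UniversalEnvelopingAlgebra.lift K (myLieHom D hD)) (u * v)).snd = _
  rw [map_mul, TrivSqZeroExt.snd_mul, myExtD_fst, myExtD_fst]
  show u • _ + MulOpposite.op v • _ = _
  rw [smul_eq_mul, op_smul_eq_mul]
  show u * myExtD D hD v + myExtD D hD u * v = _
  abel

theorem env_le_eigen (g₁ g₂ : ℚ → Submodule K L) (D : L →ₗ[K] L)
    (hD : ∀ x y, D ⁅x, y⁆ = ⁅D x, y⁆ + ⁅x, D y⁆)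
    (hDdiff : ∀ j : ℚ, ∀ x ∈ diffGrading g₁ g₂ j, D x = ((j : ℚ) : K) • x) (k : ℚ) :
    envDiffGraded g₁ g₂ k ≤ (myExtD D hD).eigenspace ((k : ℚ) : K) := by
  refine iSup_le fun s => iSup_le fun j => iSup_le fun hj => ?_
  have hsum : ∑ t, ((j t : ℚ) : K) = ((k : ℚ) : K) := by rw [← hj]; push_cast; ring
  rw [← hsum]
  refine myOfFn_prod_eigen (myExtD D hD) (myExtD_mul D hD) _ _ fun t => ?_
  refine Submodule.map_le_iff_le_comap.mpr fun x hx => ?_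
  rw [Submodule.mem_comap, Module.End.mem_eigenspace_iff]
  show myExtD D hD (ι K x) = _
  rw [myExtD_ι, hDdiff _ x hx, map_smul]
  rfl

end Ext

section BiM
variable {K : Type*} [Field K] {L : Type*} [LieRing L] [LieAlgebra K L]

/-- Bigraded pieces of the Kazhdan filtrations. -/
noncomputable def biM (g₁ g₂ : ℚ → Submodule K L) (Δ k : ℚ) :
    Submodule K (UniversalEnvelopingAlgebra K L) :=
  ⨆ (s : ℕ), ⨆ (a : Fin s → ℚ), ⨆ (b : Fin s → ℚ),
    ⨆ (_ : (s : ℚ) - ∑ t, a t ≤ Δ ∧ (∑ t, a t) - ∑ t, b t = k),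
    (List.ofFn fun t =>
      Submodule.map (UniversalEnvelopingAlgebra.ι K).toLinearMap (g₁ (a t) ⊓ g₂ (b t))).prod

theorem biM_le_kaz₁ (g₁ g₂ : ℚ → Submodule K L) (Δ k : ℚ) :
    biM g₁ g₂ Δ k ≤ kazhdanFil g₁ Δ := by
  refine iSup_le fun s => iSup_le fun a => iSup_le fun b => iSup_le fun hc => ?_
  refine le_trans (myOfFn_prod_mono fun t => Submodule.map_mono inf_le_left) ?_
  exact le_iSup_of_le s (le_iSup_of_le a (le_iSup_of_le hc.1 le_rfl))

theorem biM_le_kaz₂ (g₁ g₂ : ℚ → Submodule K L) (Δ k : ℚ) :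
    biM g₁ g₂ Δ k ≤ kazhdanFil g₂ (Δ + k) := by
  refine iSup_le fun s => iSup_le fun a => iSup_le fun b => iSup_le fun hc => ?_
  refine le_trans (myOfFn_prod_mono fun t => Submodule.map_mono inf_le_right) ?_
  refine le_iSup_of_le s (le_iSup_of_le b (le_iSup_of_le ?_ le_rfl))
  have h1 := hc.1
  have h2 := hc.2
  linarith

theorem biM_le_env (g₁ g₂ : ℚ → Submodule K L) (Δ k : ℚ) :
    biM g₁ g₂ Δ k ≤ envDiffGraded g₁ g₂ k := by
  refine iSup_le fun s => iSup_le fun a => iSup_le fun b => iSup_le fun hc => ?_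
  have hfac : ∀ t : Fin s, g₁ (a t) ⊓ g₂ (b t) ≤ diffGrading g₁ g₂ (a t - b t) := fun t =>
    le_iSup_of_le (a t, b t) (le_iSup_of_le rfl le_rfl)
  refine le_trans (myOfFn_prod_mono fun t => Submodule.map_mono (hfac t)) ?_
  refine le_iSup_of_le s (le_iSup_of_le (fun t => a t - b t) (le_iSup_of_le ?_ le_rfl))
  rw [Finset.sum_sub_distrib]
  exact hc.2

theorem kaz₁_le_biSup (g₁ g₂ : ℚ → Submodule K L)
    (hcompat₁ : ∀ k₁ : ℚ, (⨆ k₂ : ℚ, (g₁ k₁ ⊓ g₂ k₂)) = g₁ k₁) (Δ : ℚ) :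
    kazhdanFil g₁ Δ ≤ ⨆ k' : ℚ, biM g₁ g₂ Δ k' := by
  refine iSup_le fun s => iSup_le fun j => iSup_le fun hc => ?_
  have hfac : ∀ t : Fin s,
      Submodule.map (UniversalEnvelopingAlgebra.ι K).toLinearMap (g₁ (j t))
      = ⨆ b : ℚ, Submodule.map (UniversalEnvelopingAlgebra.ι K).toLinearMap
          (g₁ (j t) ⊓ g₂ b) := by
    intro t; rw [← Submodule.map_iSup, hcompat₁]
  calc (List.ofFn fun t =>
        Submodule.map (UniversalEnvelopingAlgebra.ι K).toLinearMap (g₁ (j t))).prod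
      = (List.ofFn fun t => ⨆ b : ℚ,
          Submodule.map (UniversalEnvelopingAlgebra.ι K).toLinearMap (g₁ (j t) ⊓ g₂ b)).prod := by
        simp_rw [hfac]
    _ ≤ ⨆ b : Fin s → ℚ, (List.ofFn fun t =>
          Submodule.map (UniversalEnvelopingAlgebra.ι K).toLinearMap
            (g₁ (j t) ⊓ g₂ (b t))).prod := myOfFn_prod_iSup _
    _ ≤ ⨆ k', biM g₁ g₂ Δ k' := by
        refine iSup_le fun b => ?_
        refine le_iSup_of_le ((∑ t, j t) - ∑ t, b t) ?_
        exact le_iSup_of_le s (le_iSup_of_le j (le_iSup_of_le b (le_iSup_of_le ⟨hc, rfl⟩ le_rfl)))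

theorem kaz₂_le_biSup (g₁ g₂ : ℚ → Submodule K L)
    (hcompat₂ : ∀ k₂ : ℚ, (⨆ k₁ : ℚ, (g₁ k₁ ⊓ g₂ k₂)) = g₂ k₂) (Δ' : ℚ) :
    kazhdanFil g₂ Δ' ≤ ⨆ k' : ℚ, biM g₁ g₂ (Δ' - k') k' := by
  refine iSup_le fun s => iSup_le fun j => iSup_le fun hc => ?_
  have hfac : ∀ t : Fin s,
      Submodule.map (UniversalEnvelopingAlgebra.ι K).toLinearMap (g₂ (j t))
      = ⨆ a : ℚ, Submodule.map (UniversalEnvelopingAlgebra.ι K).toLinearMap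
          (g₁ a ⊓ g₂ (j t)) := by
    intro t; rw [← Submodule.map_iSup, hcompat₂]
  calc (List.ofFn fun t =>
        Submodule.map (UniversalEnvelopingAlgebra.ι K).toLinearMap (g₂ (j t))).prod
      = (List.ofFn fun t => ⨆ a : ℚ,
          Submodule.map (UniversalEnvelopingAlgebra.ι K).toLinearMap (g₁ a ⊓ g₂ (j t))).prod := by
        simp_rw [hfac]
    _ ≤ ⨆ a : Fin s → ℚ, (List.ofFn fun t =>
          Submodule.map (UniversalEnvelopingAlgebra.ι K).toLinearMap
            (g₁ (a t) ⊓ g₂ (j t))).prod := myOfFn_prod_iSup _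
    _ ≤ ⨆ k', biM g₁ g₂ (Δ' - k') k' := by
        refine iSup_le fun a => ?_
        refine le_iSup_of_le ((∑ t, a t) - ∑ t, j t) ?_
        refine le_iSup_of_le s (le_iSup_of_le a (le_iSup_of_le j (le_iSup_of_le ⟨?_, rfl⟩ le_rfl)))
        linarith

end BiM

/-- for two gradings `Γ₁, Γ₂` of `g` (by eigenvalues of commuting semisimple
derivations), with `G = Γ₁ - Γ₂` the difference grading of `U(g)`, one has
`F^{Γ₁}_Δ U(g)^G[k] = F^{Γ₂}_{Δ+k} U(g)^G[k]` for all `k, Δ`. -/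
theorem stmt12 {K : Type*} [Field K] [CharZero K]
    {L : Type*} [LieRing L] [LieAlgebra K L]
    (g₁ g₂ : ℚ → Submodule K L)
    (h₁ : DirectSum.IsInternal g₁) (h₂ : DirectSum.IsInternal g₂)
    (hbr₁ : ∀ i j, ∀ x ∈ g₁ i, ∀ y ∈ g₁ j, ⁅x, y⁆ ∈ g₁ (i + j))
    (hbr₂ : ∀ i j, ∀ x ∈ g₂ i, ∀ y ∈ g₂ j, ⁅x, y⁆ ∈ g₂ (i + j))
    (hcompat₁ : ∀ k₁ : ℚ, (⨆ k₂ : ℚ, (g₁ k₁ ⊓ g₂ k₂)) = g₁ k₁)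
    (hcompat₂ : ∀ k₂ : ℚ, (⨆ k₁ : ℚ, (g₁ k₁ ⊓ g₂ k₂)) = g₂ k₂)
    (k Δ : ℚ) :
    kazhdanFil g₁ Δ ⊓ envDiffGraded g₁ g₂ k
      = kazhdanFil g₂ (Δ + k) ⊓ envDiffGraded g₁ g₂ k := by
  classical
  set D : L →ₗ[K] L := myDiag g₁ h₁ - myDiag g₂ h₂ with hDdef
  have hD : ∀ x y : L, D ⁅x, y⁆ = ⁅D x, y⁆ + ⁅x, D y⁆ := by
    intro x y
    simp only [hDdef, LinearMap.sub_apply, myDiag_deriv g₁ h₁ hbr₁, myDiag_deriv g₂ h₂ hbr₂,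
      sub_lie, lie_sub]
    abel
  have hDdiff : ∀ j : ℚ, ∀ x ∈ diffGrading g₁ g₂ j, D x = ((j : ℚ) : K) • x := by
    intro j x hx
    have h := myDiff_eigen g₁ g₂ h₁ h₂ j hx
    rw [LinearMap.mem_ker, LinearMap.sub_apply, LinearMap.smul_apply, LinearMap.id_apply,
      sub_eq_zero] at h
    exact h
  set f := myExtD D hD with hfdef
  have henv : ∀ k' : ℚ, envDiffGraded g₁ g₂ k' ≤ f.eigenspace ((k' : ℚ) : K) :=
    env_le_eigen g₁ g₂ D hD hDdiff
  apply le_antisymm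
  · intro x hx
    rw [Submodule.mem_inf] at hx ⊢
    obtain ⟨hx1, hx2⟩ := hx
    have hmem : x ∈ biM g₁ g₂ Δ k :=
      myPick f (fun k' => biM g₁ g₂ Δ k')
        (fun k' => le_trans (biM_le_env g₁ g₂ Δ k') (henv k'))
        (kaz₁_le_biSup g₁ g₂ hcompat₁ Δ hx1) (henv k hx2)
    exact ⟨biM_le_kaz₂ g₁ g₂ Δ k hmem, biM_le_env g₁ g₂ Δ k hmem⟩
  · intro x hx
    rw [Submodule.mem_inf] at hx ⊢
    obtain ⟨hx1, hx2⟩ := hx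
    have hmem : x ∈ biM g₁ g₂ (Δ + k - k) k :=
      myPick f (fun k' => biM g₁ g₂ (Δ + k - k') k')
        (fun k' => le_trans (biM_le_env g₁ g₂ _ k') (henv k'))
        (kaz₂_le_biSup g₁ g₂ hcompat₂ (Δ + k) hx1) (henv k hx2)
    rw [show Δ + k - k = Δ by ring] at hmem
    exact ⟨biM_le_kaz₁ g₁ g₂ Δ k hmem, biM_le_env g₁ g₂ Δ k hmem⟩
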